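/- On the circle ℝ/ℤ with Haar measure, let f(u) = min(u, 1−u). Then for all integers 0 ≤ s < t, Cov(f(2^s U), f(2^t U)) = 0, where U is Haar-distributed. Consequently, for A_m = (1/m) Σ_{t=0}^{m−1} f(2^t U), one has Var(A_m) = 1/(48m). -/

import Mathlib

/-- The distance-to-zero function on the circle `ℝ/ℤ`, read on `ℝ` via the
fractional part. -/
noncomputable def circleDist (u : ℝ) : ℝ :=
  min (Int.fract u) (1 - Int.fract u)

lemma circleDist_add_int (u : ℝ) (n : ℤ) : circleDist (u + n) = circleDist u := by
  simp [circleDist, Int.fract_add_intCast]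

lemma circleDist_periodic : Function.Periodic circleDist 1 := fun u => by
  simpa using circleDist_add_int u 1

lemma circleDist_continuous : Continuous circleDist := by
  have h : ContinuousOn (fun x : ℝ => min x (1 - x)) (Set.Icc 0 1) :=
    (continuous_id.min (continuous_const.sub continuous_id)).continuousOn
  have := h.comp_fract'' (by norm_num)
  exact this

lemma circleDist_add_half (u : ℝ) : circleDist (u + 1/2) = 1/2 - circleDist u := by
  have h1 : circleDist (u + 1/2) = circleDist (Int.fract u + 1/2) := by
    have : u + 1/2 = Int.fract u + 1/2 + (⌊u⌋ : ℤ) := by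
      rw [Int.fract]; ring
    rw [this, circleDist_add_int]
  have h2 : circleDist u = circleDist (Int.fract u) := by
    have : u = Int.fract u + (⌊u⌋ : ℤ) := by rw [Int.fract]; ring
    conv_lhs => rw [this]
    rw [circleDist_add_int]
  rw [h1, h2]
  set v := Int.fract u with hv
  have h0 : 0 ≤ v := Int.fract_nonneg u
  have h1' : v < 1 := Int.fract_lt_one u
  rcases lt_or_ge v (1/2) with hc | hc
  · have hf : Int.fract (v + 1/2) = v + 1/2 := Int.fract_eq_self.2 ⟨by linarith, by linarith⟩
    have hfv : Int.fract v = v := Int.fract_eq_self.2 ⟨h0, h1'⟩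
    rw [circleDist, circleDist, hf, hfv]
    rw [min_eq_right (by linarith), min_eq_left (by linarith)]
    ring
  · have hf : Int.fract (v + 1/2) = v - 1/2 := by
      have : v + 1/2 = v - 1/2 + (1:ℤ) := by push_cast; ring
      rw [this, Int.fract_add_intCast, Int.fract_eq_self.2 ⟨by linarith, by linarith⟩]
    have hfv : Int.fract v = v := Int.fract_eq_self.2 ⟨h0, h1'⟩
    rw [circleDist, circleDist, hf, hfv]
    rw [min_eq_left (by linarith), min_eq_right (by linarith)]
    ring

noncomputable def gg (u : ℝ) : ℝ := circleDist u - 1/4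

lemma gg_continuous : Continuous gg := circleDist_continuous.sub continuous_const

lemma gg_periodic : Function.Periodic gg 1 := fun u => by
  simp [gg, circleDist_periodic u]

lemma gg_add_int (u : ℝ) (n : ℤ) : gg (u + n) = gg u := by
  simp [gg, circleDist_add_int]

lemma gg_add_half (u : ℝ) : gg (u + 1/2) = - gg u := by
  simp only [gg, circleDist_add_half]; ring

lemma eqOn_left : Set.EqOn (fun x => gg x) (fun x => x - 1/4) (Set.uIcc 0 (1/2:ℝ)) := by
  intro x hx
  rw [Set.uIcc_of_le (by norm_num)] at hx
  obtain ⟨h0, h1⟩ := hx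
  simp only [gg, circleDist, Int.fract_eq_self.2 ⟨h0, by linarith⟩]
  rw [min_eq_left (by linarith)]

lemma eqOn_right : Set.EqOn (fun x => gg x) (fun x => 3/4 - x) (Set.uIcc (1/2:ℝ) 1) := by
  intro x hx
  rw [Set.uIcc_of_le (by norm_num)] at hx
  obtain ⟨h0, h1⟩ := hx
  rcases eq_or_lt_of_le h1 with rfl | h1
  · norm_num [gg, circleDist, Int.fract_one]
  · simp only [gg, circleDist, Int.fract_eq_self.2 ⟨by linarith, h1⟩]
    rw [min_eq_right (by linarith)]; ring

lemma int_gg : (∫ x in (0:ℝ)..1, gg x) = 0 := by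
  rw [← intervalIntegral.integral_add_adjacent_intervals
    (a := (0:ℝ)) (b := 1/2) (c := 1)
    (gg_continuous.intervalIntegrable _ _) (gg_continuous.intervalIntegrable _ _),
    intervalIntegral.integral_congr eqOn_left, intervalIntegral.integral_congr eqOn_right]
  have h1 : (∫ x in (0:ℝ)..(1/2), (x - 1/4)) = 0 := by
    simp [intervalIntegral.integral_sub (intervalIntegral.intervalIntegrable_id)
      (intervalIntegrable_const)]; norm_num
  have h2 : (∫ x in (1/2:ℝ)..1, (3/4 - x)) = 0 := by
    simp [intervalIntegral.integral_sub (intervalIntegrable_const)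
      (intervalIntegral.intervalIntegrable_id)]; norm_num
  simp only [h1, h2]; norm_num

lemma int_gg_sq : (∫ x in (0:ℝ)..1, gg x ^ 2) = 1/48 := by
  rw [← intervalIntegral.integral_add_adjacent_intervals
    (a := (0:ℝ)) (b := 1/2) (c := 1)
    ((show Continuous (fun x => gg x ^ 2) from gg_continuous.pow 2).intervalIntegrable _ _)
    ((show Continuous (fun x => gg x ^ 2) from gg_continuous.pow 2).intervalIntegrable _ _)]
  have e1 : Set.EqOn (fun x => gg x ^ 2) (fun x => (x - 1/4)^2) (Set.uIcc 0 (1/2:ℝ)) :=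
    fun x hx => by simp [eqOn_left hx]
  have e2 : Set.EqOn (fun x => gg x ^ 2) (fun x => (3/4 - x)^2) (Set.uIcc (1/2:ℝ) 1) :=
    fun x hx => by simp [eqOn_right hx]
  rw [intervalIntegral.integral_congr e1, intervalIntegral.integral_congr e2]
  have h1 : (∫ x in (0:ℝ)..(1/2), (x - 1/4)^2) = 1/96 := by
    have := intervalIntegral.integral_comp_sub_right (a := (0:ℝ)) (b := 1/2)
      (fun x => x^2) (1/4)
    rw [this, integral_pow]; norm_num
  have h2 : (∫ x in (1/2:ℝ)..1, (3/4 - x)^2) = 1/96 := by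
    have e3 : Set.EqOn (fun x : ℝ => (3/4 - x)^2) (fun x => (x - 3/4)^2)
      (Set.uIcc (1/2:ℝ) 1) := fun x _ => by ring
    rw [intervalIntegral.integral_congr e3,
      intervalIntegral.integral_comp_sub_right (fun x => x^2) (3/4), integral_pow]
    norm_num
  rw [h1, h2]; norm_num

lemma scale_integral (F : ℝ → ℝ) (hF : Continuous F) (hP : Function.Periodic F 1) (k : ℕ) :
    (∫ x in (0:ℝ)..1, F ((2:ℝ)^k * x)) = ∫ x in (0:ℝ)..1, F x := by
  have hc : ((2:ℝ)^k) ≠ 0 := by positivity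
  rw [intervalIntegral.integral_comp_mul_left F hc]
  have hint : ∀ t₁ t₂ : ℝ, IntervalIntegrable F MeasureTheory.volume t₁ t₂ :=
    fun t₁ t₂ => hF.intervalIntegrable _ _
  have := hP.intervalIntegral_add_zsmul_eq ((2:ℕ)^k : ℤ) 0 hint
  simp only [zsmul_eq_mul, mul_one, zero_add] at this
  push_cast at this
  rw [mul_zero, mul_one, this]
  rw [smul_eq_mul]
  field_simp

lemma gg_pow_shift (k : ℕ) (hk : 1 ≤ k) (x : ℝ) :
    gg ((2:ℝ)^k * (x + 1/2)) = gg ((2:ℝ)^k * x) := by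
  have : (2:ℝ)^k * (x + 1/2) = (2:ℝ)^k * x + ((2:ℤ)^(k-1) : ℤ) := by
    push_cast
    rw [mul_add]
    congr 1
    rw [← pow_sub_one_mul (by omega : k ≠ 0) (2:ℝ)]
    ring
  rw [this, gg_add_int]

lemma int_gg_mul_shift (k : ℕ) (hk : 1 ≤ k) :
    (∫ x in (0:ℝ)..1, gg x * gg ((2:ℝ)^k * x)) = 0 := by
  have hcont : Continuous (fun x => gg x * gg ((2:ℝ)^k * x)) :=
    gg_continuous.mul (gg_continuous.comp (continuous_const.mul continuous_id))
  rw [← intervalIntegral.integral_add_adjacent_intervals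
    (a := (0:ℝ)) (b := 1/2) (c := 1)
    (hcont.intervalIntegrable _ _) (hcont.intervalIntegrable _ _)]
  have key : (∫ x in (1/2:ℝ)..1, gg x * gg ((2:ℝ)^k * x))
      = - ∫ x in (0:ℝ)..(1/2), gg x * gg ((2:ℝ)^k * x) := by
    have := intervalIntegral.integral_comp_add_right (a := (0:ℝ)) (b := 1/2)
      (fun x => gg x * gg ((2:ℝ)^k * x)) (1/2)
    norm_num at this
    rw [← this, ← intervalIntegral.integral_neg]
    apply intervalIntegral.integral_congr
    intro x _
    simp only
    rw [gg_add_half, gg_pow_shift k hk]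
    ring
  rw [key]; ring

lemma cov_zero (s t : ℕ) (hst : s < t) :
    (∫ x in (0:ℝ)..1, gg ((2:ℝ)^s * x) * gg ((2:ℝ)^t * x)) = 0 := by
  set k := t - s with hk
  have hks : t = k + s := by omega
  have hF : Continuous (fun x => gg x * gg ((2:ℝ)^k * x)) :=
    gg_continuous.mul (gg_continuous.comp (continuous_const.mul continuous_id))
  have hP : Function.Periodic (fun x => gg x * gg ((2:ℝ)^k * x)) 1 := by
    intro x
    simp only
    rw [gg_periodic x]
    congr 1
    have : (2:ℝ)^k * (x + 1) = (2:ℝ)^k * x + ((2:ℤ)^k : ℤ) := by push_cast; ring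
    rw [this, gg_add_int]
  have step : (∫ x in (0:ℝ)..1, gg ((2:ℝ)^s * x) * gg ((2:ℝ)^t * x))
      = ∫ x in (0:ℝ)..1, gg x * gg ((2:ℝ)^k * x) := by
    rw [← scale_integral _ hF hP s]
    apply intervalIntegral.integral_congr
    intro x _
    simp only
    congr 2
    rw [hks, pow_add]; ring
  rw [step, int_gg_mul_shift k (by omega)]

lemma var_diag (t : ℕ) : (∫ x in (0:ℝ)..1, gg ((2:ℝ)^t * x) ^ 2) = 1/48 := by
  have hF : Continuous (fun x => gg x ^ 2) := gg_continuous.pow 2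
  have hP : Function.Periodic (fun x => gg x ^ 2) 1 := fun x => by
    simp [gg_periodic x]
  have := scale_integral _ hF hP t
  rw [this, int_gg_sq]

lemma cross (t t' : ℕ) :
    (∫ x in (0:ℝ)..1, gg ((2:ℝ)^t * x) * gg ((2:ℝ)^t' * x))
      = if t = t' then 1/48 else 0 := by
  rcases lt_trichotomy t t' with h | rfl | h
  · rw [if_neg (by omega), cov_zero t t' h]
  · rw [if_pos rfl, ← var_diag t]
    apply intervalIntegral.integral_congr
    intro x _; ring
  · rw [if_neg (by omega)]
    have e : (∫ x in (0:ℝ)..1, gg ((2:ℝ)^t * x) * gg ((2:ℝ)^t' * x))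
        = ∫ x in (0:ℝ)..1, gg ((2:ℝ)^t' * x) * gg ((2:ℝ)^t * x) :=
      intervalIntegral.integral_congr fun x _ => by ring
    rw [e, cov_zero t' t h]

/-- On the circle with Haar measure, `Cov(f(2^s U), f(2^t U)) = 0` for
`0 ≤ s < t`, where `f = circleDist` (mean `1/4`); consequently the orbit
average `A_m = (1/m) Σ_{t<m} f(2^t U)` of the doubling map satisfies
`Var(A_m) = 1/(48 m)`. -/
theorem doubling_orbit_average_variance :
    (∀ s t : ℕ, s < t →
      (∫ x in (0:ℝ)..1,
        (circleDist ((2:ℝ) ^ s * x) - 1 / 4) * (circleDist ((2:ℝ) ^ t * x) - 1 / 4)) = 0) ∧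
    (∀ m : ℕ, 0 < m →
      (∫ x in (0:ℝ)..1,
        ((1 / (m : ℝ)) * (∑ t ∈ Finset.range m, circleDist ((2:ℝ) ^ t * x)) - 1 / 4) ^ 2)
        = 1 / (48 * (m : ℝ))) := by
  constructor
  · intro s t hst
    exact cov_zero s t hst
  · intro m hm
    have hm' : (m : ℝ) ≠ 0 := Nat.cast_ne_zero.2 (by omega)
    have hrw : ∀ x : ℝ,
        ((1 / (m : ℝ)) * (∑ t ∈ Finset.range m, circleDist ((2:ℝ) ^ t * x)) - 1 / 4) ^ 2
        = (1 / (m:ℝ))^2 * ∑ t ∈ Finset.range m, ∑ t' ∈ Finset.range m,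
            gg ((2:ℝ)^t * x) * gg ((2:ℝ)^t' * x) := by
      intro x
      rw [← Finset.sum_mul_sum]
      have : (∑ t ∈ Finset.range m, gg ((2:ℝ)^t * x))
          = (∑ t ∈ Finset.range m, circleDist ((2:ℝ)^t * x)) - m * (1/4) := by
        simp [gg, Finset.sum_sub_distrib]
      rw [this]
      field_simp
      ring
    simp only [hrw]
    rw [intervalIntegral.integral_const_mul]
    rw [intervalIntegral.integral_finset_sum (fun t _ => by
      apply Continuous.intervalIntegrable
      apply continuous_finset_sum
      intro t' _
      exact (gg_continuous.comp (continuous_const.mul continuous_id)).mul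
        (gg_continuous.comp (continuous_const.mul continuous_id)))]
    have : ∀ t ∈ Finset.range m,
        (∫ x in (0:ℝ)..1, ∑ t' ∈ Finset.range m, gg ((2:ℝ)^t * x) * gg ((2:ℝ)^t' * x))
        = 1/48 := by
      intro t ht
      rw [intervalIntegral.integral_finset_sum (fun t' _ => by
        apply Continuous.intervalIntegrable
        exact (gg_continuous.comp (continuous_const.mul continuous_id)).mul
          (gg_continuous.comp (continuous_const.mul continuous_id)))]
      rw [Finset.sum_congr rfl (fun t' _ => cross t t')]
      rw [Finset.sum_ite_eq (Finset.range m) t (fun _ => (1/48:ℝ))]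
      simp [Finset.mem_range.1 ht]
    rw [Finset.sum_congr rfl this, Finset.sum_const, Finset.card_range]
    field_simp
    ring
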